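/- A poset is a chainmail if and only if every connected subset has a join, where a subset is connected when it is non-empty and any two of its elements can be linked by a finite sequence within the subset in which consecutive elements are comparable. -/

import Mathlib

variable {α : Type*}

/-- A mail-connected set: non-empty, and any two elements are linked by a
finite sequence in the set in which consecutive elements have a common lower bound. -/
def MailConnected [Preorder α] (M : Set α) : Prop :=
  M.Nonempty ∧ ∀ x ∈ M, ∀ y ∈ M,
    Relation.ReflTransGen (fun a b => a ∈ M ∧ b ∈ M ∧ ∃ c, c ≤ a ∧ c ≤ b) x y

/-- A connected set in a poset: non-empty, and any two elements are linked by a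
finite sequence in the set in which consecutive elements are comparable. -/
def PosetConnected [Preorder α] (M : Set α) : Prop :=
  M.Nonempty ∧ ∀ x ∈ M, ∀ y ∈ M,
    Relation.ReflTransGen (fun a b => a ∈ M ∧ b ∈ M ∧ (a ≤ b ∨ b ≤ a)) x y

/-- A poset is a chainmail if and only if every connected subset has a join. -/
theorem chainmail_iff_every_connected_has_join [PartialOrder α] :
    (∀ M : Set α, MailConnected M → ∃ j, IsLUB M j) ↔
    (∀ M : Set α, PosetConnected M → ∃ j, IsLUB M j) := by
  constructor
  · intro h M hM
    apply h M
    refine ⟨hM.1, fun x hx y hy => ?_⟩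
    refine Relation.ReflTransGen.mono ?_ x y (hM.2 x hx y hy)
    rintro a b ⟨ha, hb, hab | hba⟩
    · exact ⟨ha, hb, a, le_refl a, hab⟩
    · exact ⟨ha, hb, b, hba, le_refl b⟩
  · intro h M hM
    set M' : Set α := {x | ∃ a ∈ M, x ≤ a} with hM'def
    have hsub : M ⊆ M' := fun a ha => ⟨a, ha, le_refl a⟩
    have hconn : PosetConnected M' := by
      refine ⟨hM.1.mono hsub, ?_⟩
      rintro x ⟨a, ha, hxa⟩ y ⟨b, hb, hyb⟩
      have step1 : Relation.ReflTransGen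
          (fun a b => a ∈ M' ∧ b ∈ M' ∧ (a ≤ b ∨ b ≤ a)) x a :=
        Relation.ReflTransGen.single ⟨⟨a, ha, hxa⟩, hsub ha, Or.inl hxa⟩
      have step3 : Relation.ReflTransGen
          (fun a b => a ∈ M' ∧ b ∈ M' ∧ (a ≤ b ∨ b ≤ a)) b y :=
        Relation.ReflTransGen.single ⟨hsub hb, ⟨b, hb, hyb⟩, Or.inr hyb⟩
      have key : ∀ u v : α, Relation.ReflTransGen
          (fun a b => a ∈ M ∧ b ∈ M ∧ ∃ c, c ≤ a ∧ c ≤ b) u v →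
          Relation.ReflTransGen
          (fun a b => a ∈ M' ∧ b ∈ M' ∧ (a ≤ b ∨ b ≤ a)) u v := by
        intro u v huv
        induction huv with
        | refl => exact .refl
        | tail _ hstep ih =>
          obtain ⟨hu, hv, c, hcu, hcv⟩ := hstep
          exact (ih.tail ⟨hsub hu, ⟨_, hu, hcu⟩, Or.inr hcu⟩).tail
            ⟨⟨_, hu, hcu⟩, hsub hv, Or.inl hcv⟩
      have step2 := key a b (hM.2 a ha b hb)
      exact step1.trans (step2.trans step3)
    obtain ⟨j, hj⟩ := h M' hconn
    refine ⟨j, ?_, ?_⟩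
    · intro a ha; exact hj.1 (hsub ha)
    · intro u hu
      refine hj.2 ?_
      rintro x ⟨a, ha, hxa⟩
      exact hxa.trans (hu ha)
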